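/- Let p ≥ 3 be prime, m ≥ 2, and consider elements y_1,…,y_{2m} of Z/pZ satisfying y_{2j−1} = y_{2j} for j = 1,…,m. Then the equations y_1 = p·y_3 − (p−1)·y_2 and (p+1)·y_{2i−1} − p·y_{2i−2} = p·y_{2i+1} − (p−1)·y_{2i} (i = 2,…,m−1) hold automatically; consequently the number of tuples (y_1,…,y_{2m}) ∈ (Z/pZ)^{2m} satisfying all three families of equations is exactly p^m. -/

import Mathlib

/-- The linear system over `ZMod q` from the paper's proof of Theorem B
(coloring equations of `F(m,p)` by the symmetric dihedral quandle `(R_q, id)`),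
in variables `Y 1, …, Y (2*m)`. -/
def Sys (p q m : ℕ) (Y : ℕ → ZMod q) : Prop :=
  Y 1 = (p : ZMod q) * Y 3 - ((p : ZMod q) - 1) * Y 2 ∧
  (∀ i : ℕ, 2 ≤ i → i ≤ m - 1 →
    ((p : ZMod q) + 1) * Y (2 * i - 1) - (p : ZMod q) * Y (2 * i - 2)
      = (p : ZMod q) * Y (2 * i + 1) - ((p : ZMod q) - 1) * Y (2 * i)) ∧
  (∀ j : ℕ, 1 ≤ j → j ≤ m → Y (2 * j - 1) = Y (2 * j))

/-- A tuple `(y_1, …, y_{2m})` regarded as a function on `ℕ` (1-indexed, `0` outside). -/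
def extendFn (q m : ℕ) (y : Fin (2 * m) → ZMod q) : ℕ → ZMod q := fun k =>
  if h : 1 ≤ k ∧ k ≤ 2 * m then y ⟨k - 1, by omega⟩ else 0

/-- For a prime `p ≥ 3` and `m ≥ 2`, any tuple in `ZMod p` satisfying
`y_{2j−1} = y_{2j}` (`j = 1,…,m`) automatically satisfies the remaining equations
of the system (with parameter `p`, computed mod `p`); consequently the number of
solutions `(y_1, …, y_{2m}) ∈ (ZMod p)^{2m}` of the full system is exactly `p^m`. -/
lemma sys_iff (p m : ℕ) (hm : 1 ≤ m) (Y : ℕ → ZMod p) :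
    Sys p p m Y ↔ ∀ j : ℕ, 1 ≤ j → j ≤ m → Y (2 * j - 1) = Y (2 * j) := by
  have h0 : (p : ZMod p) = 0 := ZMod.natCast_self p
  constructor
  · exact fun h => h.2.2
  · intro h
    refine ⟨?_, ?_, h⟩
    · have h1 := h 1 le_rfl hm
      norm_num at h1
      rw [h0]; ring_nf; exact h1
    · intro i h2 him
      have hi := h i (by omega) (by omega)
      rw [h0]; ring_nf
      rw [show i * 2 - 1 = 2 * i - 1 from by omega, show i * 2 = 2 * i from by omega]
      exact hi

theorem stmt12 (p m : ℕ) (hp : p.Prime) (hp3 : 3 ≤ p) (hm : 2 ≤ m) :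
    (∀ Y : ℕ → ZMod p, (∀ j : ℕ, 1 ≤ j → j ≤ m → Y (2 * j - 1) = Y (2 * j)) →
      Sys p p m Y) ∧
    Nat.card {y : Fin (2 * m) → ZMod p // Sys p p m (extendFn p m y)} = p ^ m := by
  have hm1 : 1 ≤ m := by omega
  constructor
  · intro Y hY
    exact (sys_iff p m hm1 Y).mpr hY
  · -- pairing characterization on tuples
    have key : ∀ y : Fin (2 * m) → ZMod p,
        Sys p p m (extendFn p m y) ↔
        ∀ j : ℕ, (h : 1 ≤ j ∧ j ≤ m) →
          y ⟨2 * j - 2, by omega⟩ = y ⟨2 * j - 1, by omega⟩ := by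
      intro y
      rw [sys_iff p m hm1]
      constructor
      · intro h j hj
        have := h j hj.1 hj.2
        unfold extendFn at this
        rw [dif_pos ⟨by omega, by omega⟩, dif_pos ⟨by omega, by omega⟩] at this
        convert this using 2 <;> simp only [Fin.mk.injEq] <;> omega
      · intro h j hj1 hj2
        unfold extendFn
        rw [dif_pos ⟨by omega, by omega⟩, dif_pos ⟨by omega, by omega⟩]
        have := h j ⟨hj1, hj2⟩
        convert this using 2 <;> simp only [Fin.mk.injEq] <;> omega
    have e : {y : Fin (2 * m) → ZMod p // Sys p p m (extendFn p m y)} ≃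
        (Fin m → ZMod p) := by
      refine ⟨fun y => fun j => y.1 ⟨2 * j.1, by omega⟩,
        fun z => ⟨fun k => z ⟨k.1 / 2, by omega⟩, ?_⟩, ?_, ?_⟩
      · rw [key]
        intro j hj
        congr 1
        apply Fin.ext
        simp only
        omega
      · intro y
        apply Subtype.ext
        funext k
        simp only
        have hpair := (key y.1).mp y.2
        rcases Nat.even_or_odd k.1 with ⟨t, ht⟩ | ⟨t, ht⟩
        · have h1 : (⟨2 * (k.1 / 2), by omega⟩ : Fin (2 * m)) = k := Fin.ext (by simp only; omega)
          rw [h1]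
        · have his := hpair (t + 1) ⟨by omega, by omega⟩
          have e1 : (⟨2 * (t+1) - 2, by omega⟩ : Fin (2 * m)) = ⟨2 * (k.1 / 2), by omega⟩ :=
            Fin.ext (by simp only; omega)
          have e2 : (⟨2 * (t+1) - 1, by omega⟩ : Fin (2 * m)) = k := Fin.ext (by simp only; omega)
          rw [e1, e2] at his
          exact his
      · intro z
        funext j
        simp only
        congr 1
        apply Fin.ext
        simp only
        omega
    rw [Nat.card_congr e]
    haveI : NeZero p := ⟨by omega⟩
    simp [Nat.card_eq_fintype_card, ZMod.card]
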